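/- Let G be a finite simple graph with m edges containing no cycle of length three and no cycle of length four (girth at least five). Then every graphic parity network for G has size at least 7m/6; that is, 6 times the size of any graphic parity network for G is at least 7m. -/

import Mathlib

/-- Apply a CNOT gate `g = (control, target)` to a state `t : V → Finset V`:
the target wire receives the symmetric difference of the control and target terms,
all other wires are unchanged. -/
def applyGate {V : Type*} [DecidableEq V] (g : V × V) (t : V → Finset V) : V → Finset V :=
  fun w => if w = g.2 then symmDiff (t g.1) (t g.2) else t w

/-- Run a circuit (a list of CNOT gates) from the initial state `term v = {v}`. -/
def runCircuit {V : Type*} [DecidableEq V] (C : List (V × V)) : V → Finset V :=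
  C.foldl (fun t g => applyGate g t) (fun v => {v})

/-- `C` is a graphic parity network for the graph `G`:
every gate has distinct control and target, every edge `{u, v}` of `G` appears as the
term of some wire after some prefix of the circuit, and the final state is the initial
state. Its size is `C.length`. -/
def IsGPN {V : Type*} [DecidableEq V] (G : SimpleGraph V) (C : List (V × V)) : Prop :=
  (∀ g ∈ C, g.1 ≠ g.2) ∧
  (∀ u v : V, G.Adj u v → ∃ (k : ℕ) (w : V), runCircuit (C.take k) w = {u, v}) ∧
  (∀ v : V, runCircuit C v = {v})

set_option linter.unusedSectionVars false

section Helpers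

open SimpleGraph Finset

variable {V : Type*} [DecidableEq V] {G : SimpleGraph V}

lemma no_cycle_lt (hg : 5 ≤ G.girth) {a : V} (w : G.Walk a a) (hc : w.IsCycle)
    (hl : w.length ≤ 4) : False := by
  have hne : G.egirth ≠ ⊤ := by
    intro ht
    rw [SimpleGraph.girth, ht] at hg
    simp at hg
  have h5 : (5 : ℕ∞) ≤ G.egirth := by
    rw [← ENat.coe_toNat hne]
    exact_mod_cast hg
  have h1 := (le_egirth.mp h5) a w hc
  have : (5:ℕ∞) ≤ (4:ℕ∞) := le_trans h1 (by exact_mod_cast hl)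
  norm_num at this

lemma no3 (hg : 5 ≤ G.girth) {a b c : V} (hab : G.Adj a b) (hbc : G.Adj b c)
    (hca : G.Adj c a) : False := by
  have h1 := hab.ne; have h2 := hbc.ne; have h3 := hca.ne
  have h4 := hab.ne'; have h5 := hbc.ne'; have h6 := hca.ne'
  refine no_cycle_lt hg (.cons hab (.cons hbc (.cons hca .nil))) ?_ (by simp)
  rw [SimpleGraph.Walk.cons_isCycle_iff, SimpleGraph.Walk.cons_isPath_iff]
  simp [SimpleGraph.Walk.isPath_def, Sym2.eq_iff]
  tauto

lemma no4 (hg : 5 ≤ G.girth) {a b c d : V} (hab : G.Adj a b) (hbc : G.Adj b c)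
    (hcd : G.Adj c d) (hda : G.Adj d a) (hac : a ≠ c) (hbd : b ≠ d) : False := by
  have h1 := hab.ne; have h2 := hbc.ne; have h3 := hcd.ne; have h4 := hda.ne
  have h5 := hab.ne'; have h6 := hbc.ne'; have h7 := hcd.ne'; have h8 := hda.ne'
  have h9 := hac.symm; have h10 := hbd.symm
  refine no_cycle_lt hg (.cons hab (.cons hbc (.cons hcd (.cons hda .nil)))) ?_ (by simp)
  rw [SimpleGraph.Walk.cons_isCycle_iff, SimpleGraph.Walk.cons_isPath_iff,
    SimpleGraph.Walk.cons_isPath_iff]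
  simp [SimpleGraph.Walk.isPath_def, Sym2.eq_iff]
  tauto

lemma pair_eq_cases {a b c d : V} (hab : a ≠ b) (h : ({a,b} : Finset V) = {c,d}) :
    (a = c ∧ b = d) ∨ (a = d ∧ b = c) := by
  have ha : a ∈ ({c,d} : Finset V) := h ▸ (by simp)
  have hb : b ∈ ({c,d} : Finset V) := h ▸ (by simp)
  simp only [Finset.mem_insert, Finset.mem_singleton] at ha hb
  rcases ha with rfl | rfl
  · rcases hb with rfl | rfl
    · exact absurd rfl hab
    · exact Or.inl ⟨rfl, rfl⟩
  · rcases hb with rfl | rfl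
    · exact Or.inr ⟨rfl, rfl⟩
    · exact absurd rfl hab

lemma adj_of_pair_eq {a b u v : V} (hab : G.Adj a b) (h : ({a,b} : Finset V) = {u,v}) :
    G.Adj u v := by
  rcases pair_eq_cases hab.ne h with ⟨rfl, rfl⟩ | ⟨rfl, rfl⟩
  · exact hab
  · exact hab.symm

/-- symmDiff of two distinct doubleton edges: either they share a vertex or are disjoint. -/
lemma sd_cases {a b c d : V} (hab : a ≠ b) (hcd : c ≠ d) (hne : ({a,b} : Finset V) ≠ {c,d}) :
    (∃ u x y, x ≠ y ∧ u ≠ x ∧ u ≠ y ∧ ({a,b} : Finset V) = {u,x} ∧ ({c,d} : Finset V) = {u,y} ∧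
      symmDiff ({a,b} : Finset V) {c,d} = {x,y}) ∨
    (a ≠ c ∧ a ≠ d ∧ b ≠ c ∧ b ≠ d ∧ symmDiff ({a,b} : Finset V) {c,d} = {a,b,c,d}) := by
  by_cases hac : a = c
  · subst hac
    have hbd : b ≠ d := fun h => hne (by rw [h])
    refine Or.inl ⟨a, b, d, hbd, hab, hcd, rfl, rfl, ?_⟩
    ext z
    by_cases h1 : z = a <;> by_cases h2 : z = b <;> by_cases h3 : z = d <;>
      simp_all [Finset.mem_symmDiff]
  by_cases had : a = d
  · subst had
    have hbc : b ≠ c := fun h => hne (by rw [h]; exact Finset.pair_comm _ _)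
    refine Or.inl ⟨a, b, c, hbc, hab, (Ne.symm hcd), rfl, Finset.pair_comm c a, ?_⟩
    ext z
    by_cases h1 : z = a <;> by_cases h2 : z = b <;> by_cases h3 : z = c <;>
      simp_all [Finset.mem_symmDiff]
  by_cases hbc : b = c
  · subst hbc
    have hbd : b ≠ d := hcd
    refine Or.inl ⟨b, a, d, had, Ne.symm hab, hbd, Finset.pair_comm a b, rfl, ?_⟩
    ext z
    by_cases h1 : z = a <;> by_cases h2 : z = b <;> by_cases h3 : z = d <;>
      simp_all [Finset.mem_symmDiff]
  by_cases hbd : b = d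
  · subst hbd
    refine Or.inl ⟨b, a, c, hac, Ne.symm hab, Ne.symm hcd, Finset.pair_comm a b,
      Finset.pair_comm c b, ?_⟩
    ext z
    by_cases h1 : z = a <;> by_cases h2 : z = b <;> by_cases h3 : z = c <;>
      simp_all [Finset.mem_symmDiff]
  · refine Or.inr ⟨hac, had, hbc, hbd, ?_⟩
    ext z
    by_cases h1 : z = a <;> by_cases h2 : z = b <;> by_cases h3 : z = c <;>
      by_cases h4 : z = d <;> simp_all [Finset.mem_symmDiff]

lemma card4 {a b c d : V} (hab : a ≠ b) (hcd : c ≠ d) (hac : a ≠ c) (had : a ≠ d)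
    (hbc : b ≠ c) (hbd : b ≠ d) : ({a,b,c,d} : Finset V).card = 4 := by
  rw [Finset.card_insert_of_notMem (by simp [hab, hac, had]),
    Finset.card_insert_of_notMem (by simp [hbc, hbd]),
    Finset.card_insert_of_notMem (by simp [hcd])]
  simp

/-- A symmetric difference of two distinct edges is never an edge pair. -/
lemma notEdge (hg : 5 ≤ G.girth) {a b c d x y : V} (hab : G.Adj a b) (hcd : G.Adj c d)
    (hxy : G.Adj x y) (hne : ({a,b} : Finset V) ≠ {c,d}) :
    ({x,y} : Finset V) ≠ symmDiff ({a,b} : Finset V) {c,d} := by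
  intro hEq
  rcases sd_cases hab.ne hcd.ne hne with ⟨u, x', y', hxy', hux, huy, h1, h2, h3⟩ |
    ⟨h1, h2, h3, h4, h5⟩
  · rw [h3] at hEq
    have hadj : G.Adj x' y' := adj_of_pair_eq hxy hEq
    exact no3 hg (adj_of_pair_eq hab h1) hadj ((adj_of_pair_eq hcd h2).symm)
  · rw [h5] at hEq
    have hc : c ∈ ({x,y} : Finset V) := hEq ▸ (by simp)
    have ha : a ∈ ({x,y} : Finset V) := hEq ▸ (by simp)
    have hb : b ∈ ({x,y} : Finset V) := hEq ▸ (by simp)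
    simp only [Finset.mem_insert, Finset.mem_singleton] at hc ha hb
    rcases ha with rfl | rfl <;> rcases hb with rfl | rfl <;> rcases hc with rfl | rfl <;>
      first
        | exact hab.ne rfl
        | exact h1 rfl
        | exact h2 rfl
        | exact h3 rfl
        | exact h4 rfl

set_option maxHeartbeats 4000000 in
/-- Key girth lemma. -/
lemma key (hg : 5 ≤ G.girth) {a b c d p q r s : V} (hab : G.Adj a b) (hcd : G.Adj c d)
    (hpq : G.Adj p q) (hrs : G.Adj r s)
    (hB : symmDiff ({a,b} : Finset V) {c,d} = symmDiff ({p,q} : Finset V) {r,s})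
    (h1 : ({a,b} : Finset V) ≠ {c,d}) (h2 : ({p,q} : Finset V) ≠ {r,s})
    (h3 : ({a,b} : Finset V) ≠ {p,q}) (h4 : ({a,b} : Finset V) ≠ {r,s}) : False := by
  have h5 : ({c,d} : Finset V) ≠ {p,q} := by
    intro he
    rw [he] at hB
    exact h4 (symmDiff_left_injective _
      (by rw [symmDiff_comm ({p,q}:Finset V) {r,s}] at hB; exact hB))
  have h6 : ({c,d} : Finset V) ≠ {r,s} := by
    intro he
    rw [he] at hB
    exact h3 (symmDiff_left_injective _ hB)
  rcases sd_cases hab.ne hcd.ne h1 with ⟨u, x, y, hxy, hux, huy, e1, e2, e3⟩ |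
    ⟨d1, d2, d3, d4, e5⟩
  · rcases sd_cases hpq.ne hrs.ne h2 with ⟨u', x', y', hxy', hux', huy', f1, f2, f3⟩ |
      ⟨g1, g2, g3, g4, f5⟩
    · rw [e3, f3] at hB
      have hu : u ≠ u' := by
        intro he
        subst he
        rcases pair_eq_cases hxy hB with ⟨rfl, rfl⟩ | ⟨rfl, rfl⟩
        · exact h3 (e1.trans f1.symm)
        · exact h4 (e1.trans f2.symm)
      have hx : G.Adj u x := adj_of_pair_eq hab e1
      have hy : G.Adj u y := adj_of_pair_eq hcd e2
      have hx' : G.Adj u' x' := adj_of_pair_eq hpq f1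
      have hy' : G.Adj u' y' := adj_of_pair_eq hrs f2
      rcases pair_eq_cases hxy hB with ⟨rfl, rfl⟩ | ⟨rfl, rfl⟩
      · exact no4 hg hx hx'.symm hy' hy.symm hu hxy
      · exact no4 hg hx hy'.symm hx' hy.symm hu hxy
    · rw [e3, f5] at hB
      have hle : (4:ℕ) ≤ 2 := by
        calc (4:ℕ) = ({p,q,r,s} : Finset V).card :=
              (card4 hpq.ne hrs.ne g1 g2 g3 g4).symm
          _ = ({x,y} : Finset V).card := by rw [hB]
          _ ≤ 2 := Finset.card_le_two
      omega
  · rcases sd_cases hpq.ne hrs.ne h2 with ⟨u', x', y', hxy', hux', huy', f1, f2, f3⟩ |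
      ⟨g1, g2, g3, g4, f5⟩
    · rw [e5, f3] at hB
      have hle : (4:ℕ) ≤ 2 := by
        calc (4:ℕ) = ({a,b,c,d} : Finset V).card := (card4 hab.ne hcd.ne d1 d2 d3 d4).symm
          _ = ({x',y'} : Finset V).card := by rw [← hB]
          _ ≤ 2 := Finset.card_le_two
      omega
    · rw [e5, f5] at hB
      have hp : p = a ∨ p = b ∨ p = c ∨ p = d := by
        have hm : p ∈ ({a,b,c,d} : Finset V) := by rw [hB]; simp
        simpa using hm
      have hq : q = a ∨ q = b ∨ q = c ∨ q = d := by
        have hm : q ∈ ({a,b,c,d} : Finset V) := by rw [hB]; simp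
        simpa using hm
      have hrsmem : ∀ z, z = a ∨ z = b ∨ z = c ∨ z = d → z ≠ p → z ≠ q → z = r ∨ z = s := by
        intro z hz hzp hzq
        have hm : z ∈ ({p,q,r,s} : Finset V) := by
          rw [← hB]
          rcases hz with rfl | rfl | rfl | rfl <;> simp
        simp only [Finset.mem_insert, Finset.mem_singleton] at hm
        tauto
      have getAdj : ∀ z w, z = r ∨ z = s → w = r ∨ w = s → z ≠ w → G.Adj z w := by
        intro z w hz hw hzw
        rcases hz with rfl | rfl <;> rcases hw with rfl | rfl
        · exact absurd rfl hzw
        · exact hrs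
        · exact hrs.symm
        · exact absurd rfl hzw
      rcases hp with hp | hp | hp | hp <;> rcases hq with hq | hq | hq | hq
      · exact hpq.ne (hp.trans hq.symm)
      · exact h3 (by rw [hp, hq])
      · have hb' := hrsmem b (by tauto) (by rw [hp]; exact hab.ne') (by rw [hq]; exact d3)
        have hd' := hrsmem d (by tauto) (by rw [hp]; exact Ne.symm d2) (by rw [hq]; exact hcd.ne')
        have hbd : G.Adj b d := getAdj b d hb' hd' d4
        have hca : G.Adj c a := by rw [hp, hq] at hpq; exact hpq.symm
        exact no4 hg hab hbd hcd.symm hca d2 d3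
      · have hb' := hrsmem b (by tauto) (by rw [hp]; exact hab.ne') (by rw [hq]; exact d4)
        have hc' := hrsmem c (by tauto) (by rw [hp]; exact Ne.symm d1) (by rw [hq]; exact hcd.ne)
        have hbc : G.Adj b c := getAdj b c hb' hc' d3
        have hda : G.Adj d a := by rw [hp, hq] at hpq; exact hpq.symm
        exact no4 hg hab hbc hcd hda d1 d4
      · exact h3 (by rw [hp, hq]; exact Finset.pair_comm a b)
      · exact hpq.ne (hp.trans hq.symm)
      · have ha' := hrsmem a (by tauto) (by rw [hp]; exact hab.ne) (by rw [hq]; exact d1)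
        have hd' := hrsmem d (by tauto) (by rw [hp]; exact Ne.symm d4) (by rw [hq]; exact hcd.ne')
        have hda : G.Adj d a := getAdj d a hd' ha' (Ne.symm d2)
        have hbc : G.Adj b c := by rw [hp, hq] at hpq; exact hpq
        exact no4 hg hab hbc hcd hda d1 d4
      · have ha' := hrsmem a (by tauto) (by rw [hp]; exact hab.ne) (by rw [hq]; exact d2)
        have hc' := hrsmem c (by tauto) (by rw [hp]; exact Ne.symm d3) (by rw [hq]; exact hcd.ne)
        have hca : G.Adj c a := getAdj c a hc' ha' (Ne.symm d1)
        have hbd : G.Adj b d := by rw [hp, hq] at hpq; exact hpq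
        exact no4 hg hab hbd hcd.symm hca d2 d3
      · have hb' := hrsmem b (by tauto) (by rw [hp]; exact d3) (by rw [hq]; exact hab.ne')
        have hd' := hrsmem d (by tauto) (by rw [hp]; exact hcd.ne') (by rw [hq]; exact Ne.symm d2)
        have hbd : G.Adj b d := getAdj b d hb' hd' d4
        have hca : G.Adj c a := by rw [hp, hq] at hpq; exact hpq
        exact no4 hg hab hbd hcd.symm hca d2 d3
      · have ha' := hrsmem a (by tauto) (by rw [hp]; exact d1) (by rw [hq]; exact hab.ne)
        have hd' := hrsmem d (by tauto) (by rw [hp]; exact hcd.ne') (by rw [hq]; exact Ne.symm d4)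
        have hda : G.Adj d a := getAdj d a hd' ha' (Ne.symm d2)
        have hbc : G.Adj b c := by rw [hp, hq] at hpq; exact hpq.symm
        exact no4 hg hab hbc hcd hda d1 d4
      · exact hpq.ne (hp.trans hq.symm)
      · exact h5 (by rw [hp, hq])
      · have hb' := hrsmem b (by tauto) (by rw [hp]; exact d4) (by rw [hq]; exact hab.ne')
        have hc' := hrsmem c (by tauto) (by rw [hp]; exact hcd.ne) (by rw [hq]; exact Ne.symm d1)
        have hbc : G.Adj b c := getAdj b c hb' hc' d3
        have hda : G.Adj d a := by rw [hp, hq] at hpq; exact hpq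
        exact no4 hg hab hbc hcd hda d1 d4
      · have ha' := hrsmem a (by tauto) (by rw [hp]; exact d2) (by rw [hq]; exact hab.ne)
        have hc' := hrsmem c (by tauto) (by rw [hp]; exact hcd.ne) (by rw [hq]; exact Ne.symm d3)
        have hca : G.Adj c a := getAdj c a hc' ha' (Ne.symm d1)
        have hbd : G.Adj b d := by rw [hp, hq] at hpq; exact hpq.symm
        exact no4 hg hab hbd hcd.symm hca d2 d3
      · exact h5 (by rw [hp, hq]; exact Finset.pair_comm c d)
      · exact hpq.ne (hp.trans hq.symm)


lemma sd_not_singleton {a b c d : V} (hab : a ≠ b) (hcd : c ≠ d)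
    (hne : ({a,b} : Finset V) ≠ {c,d}) (z : V) :
    symmDiff ({a,b} : Finset V) {c,d} ≠ {z} := by
  intro hz
  rcases sd_cases hab hcd hne with ⟨u, x, y, hxy, hux, huy, e1, e2, e3⟩ | ⟨d1, d2, d3, d4, e5⟩
  · rw [e3] at hz
    have hx : x ∈ ({z} : Finset V) := by rw [← hz]; simp
    have hy : y ∈ ({z} : Finset V) := by rw [← hz]; simp
    simp only [Finset.mem_singleton] at hx hy
    exact hxy (hx.trans hy.symm)
  · rw [e5] at hz
    have hx : a ∈ ({z} : Finset V) := by rw [← hz]; simp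
    have hy : c ∈ ({z} : Finset V) := by rw [← hz]; simp
    simp only [Finset.mem_singleton] at hx hy
    exact d1 (hx.trans hy.symm)

end Helpers

section Circuit

variable {V : Type*} [DecidableEq V] [Inhabited V]

def stt (C : List (V × V)) (k : ℕ) : V → Finset V := runCircuit (C.take k)

lemma stt_zero (C : List (V × V)) (v : V) : stt C 0 v = {v} := rfl

lemma stt_ge (C : List (V × V)) {k : ℕ} (hk : C.length ≤ k) : stt C k = runCircuit C := by
  rw [stt, List.take_of_length_le hk]

lemma stt_succ (C : List (V × V)) {k : ℕ} (hk : k < C.length) :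
    stt C (k+1) = applyGate (C.getD k default) (stt C k) := by
  have h1 : C.take (k+1) = C.take k ++ [C.getD k default] := by
    rw [List.take_succ, List.getElem?_eq_getElem hk]
    simp [List.getD, List.getElem?_eq_getElem hk]
  rw [stt, stt, runCircuit, runCircuit, h1, List.foldl_append]
  simp

lemma stt_other (C : List (V × V)) {k : ℕ} (hk : k < C.length) {w : V}
    (hw : w ≠ (C.getD k default).2) : stt C (k+1) w = stt C k w := by
  rw [stt_succ C hk, applyGate, if_neg hw]

lemma stt_gate (C : List (V × V)) {k : ℕ} (hk : k < C.length) :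
    stt C (k+1) (C.getD k default).2 =
      symmDiff (stt C k (C.getD k default).1) (stt C k (C.getD k default).2) := by
  rw [stt_succ C hk, applyGate, if_pos rfl]

end Circuit

open Finset in
set_option maxHeartbeats 2000000 in
/-- If `G` has no cycle of length three or four (girth at least five), then every
graphic parity network for `G` has size at least `7m/6`, i.e. `6 · size ≥ 7m`. -/
theorem stmt8 {V : Type*} [Fintype V] [DecidableEq V] (G : SimpleGraph V)
    (hgirth : 5 ≤ G.girth) (C : List (V × V)) (h : IsGPN G C) :
    7 * Nat.card G.edgeSet ≤ 6 * C.length := by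
  classical
  obtain ⟨hdist, hedges, hfinal⟩ := h
  set N := C.length with hNdef
  have hm : Nat.card G.edgeSet = G.edgeSet.toFinset.card := by
    rw [Nat.card_coe_set_eq, Set.ncard_eq_toFinset_card']
  rw [hm]
  rcases Finset.eq_empty_or_nonempty G.edgeSet.toFinset with hE | ⟨e0, he0⟩
  · rw [hE]
    simp
  have hex : ∃ u v : V, G.Adj u v := by
    revert he0
    induction e0 using Sym2.ind with
    | _ u v => exact fun he0 => ⟨u, v, (SimpleGraph.mem_edgeSet G).mp (Set.mem_toFinset.mp he0)⟩
  obtain ⟨u0, v0, hadj0⟩ := hex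
  haveI : Inhabited V := ⟨u0⟩
  -- main existence of creation and destruction gates for each edge
  have exmain : ∀ e : Sym2 V, ∃ (z : V × V) (i j : ℕ), e ∈ G.edgeSet.toFinset →
      (G.Adj z.1 z.2 ∧ e = s(z.1, z.2) ∧ i < N ∧ j < N ∧
       stt C (i+1) ((C.getD i default).2) = {z.1, z.2} ∧
       stt C i ((C.getD i default).2) ≠ {z.1, z.2} ∧
       stt C j ((C.getD j default).2) = {z.1, z.2}) := by
    intro e
    by_cases he : e ∈ G.edgeSet.toFinset
    case neg => exact ⟨(u0, v0), 0, 0, fun hh => absurd hh he⟩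
    revert he
    induction e using Sym2.ind with
    | _ u v =>
      intro he
      have hadj : G.Adj u v := (SimpleGraph.mem_edgeSet G).mp (Set.mem_toFinset.mp he)
      have hpair_ne : ∀ w : V, ({w} : Finset V) ≠ {u, v} := by
        intro w hw
        have h2 := congrArg Finset.card hw
        rw [Finset.card_singleton, Finset.card_pair hadj.ne] at h2
        omega
      have hQ : ∃ k, ∃ w, stt C k w = {u, v} := by
        obtain ⟨k, w, hk⟩ := hedges u v hadj
        exact ⟨k, w, hk⟩
      obtain ⟨k0, ⟨w, hw⟩, hk0min⟩ :
          ∃ k0, (∃ w, stt C k0 w = {u,v}) ∧ ∀ m, m < k0 → ¬∃ w', stt C m w' = {u,v} :=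
        ⟨Nat.find hQ, Nat.find_spec hQ, fun m hm => Nat.find_min hQ hm⟩
      have hk0pos : k0 ≠ 0 := by
        intro h0
        rw [h0, stt_zero] at hw
        exact hpair_ne w hw
      have hk0ltN : k0 < N := by
        by_contra hgt
        push_neg at hgt
        rw [stt_ge C hgt, hfinal w] at hw
        exact hpair_ne w hw
      have hik : (k0 - 1) + 1 = k0 := Nat.succ_pred_eq_of_ne_zero hk0pos
      have hiN : k0 - 1 < N := lt_of_le_of_lt (Nat.pred_le k0) hk0ltN
      have hnoti : ∀ w', stt C (k0 - 1) w' ≠ {u,v} := by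
        intro w' hw'
        exact hk0min (k0 - 1) (Nat.pred_lt hk0pos) ⟨w', hw'⟩
      have hwt : w = (C.getD (k0 - 1) default).2 := by
        by_contra hne
        have h2 := stt_other C hiN hne
        rw [hik] at h2
        exact hnoti w (by rw [← h2]; exact hw)
      have hnew : stt C ((k0 - 1)+1) ((C.getD (k0 - 1) default).2) = {u,v} := by
        rw [hik, ← hwt]; exact hw
      have hR : ∃ l, k0 < l ∧ stt C l w ≠ {u, v} :=
        ⟨N, hk0ltN, by rw [stt_ge C le_rfl, hfinal w]; exact hpair_ne w⟩
      obtain ⟨l0, ⟨hl1, hl2⟩, hlmin, hl0N⟩ :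
          ∃ l0, (k0 < l0 ∧ stt C l0 w ≠ {u,v}) ∧
            (∀ m, m < l0 → ¬(k0 < m ∧ stt C m w ≠ {u,v})) ∧ l0 ≤ N :=
        ⟨Nat.find hR, Nat.find_spec hR, fun m hm => Nat.find_min hR hm,
          Nat.find_le ⟨hk0ltN, by rw [stt_ge C le_rfl, hfinal w]; exact hpair_ne w⟩⟩
      have hl0pos : l0 ≠ 0 := Nat.ne_zero_of_lt hl1
      have hjl : (l0 - 1) + 1 = l0 := Nat.succ_pred_eq_of_ne_zero hl0pos
      have hjN : l0 - 1 < N := lt_of_lt_of_le (Nat.pred_lt hl0pos) hl0N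
      have hjge : k0 ≤ l0 - 1 := Nat.le_pred_of_lt hl1
      have hjold : stt C (l0 - 1) w = {u, v} := by
        rcases Nat.eq_or_lt_of_le hjge with heq | hlt
        · rw [← heq]; exact hw
        · by_contra hne
          exact hlmin (l0 - 1) (Nat.pred_lt hl0pos) ⟨hlt, hne⟩
      have hjt : w = (C.getD (l0 - 1) default).2 := by
        by_contra hne
        have h2 := stt_other C hjN hne
        rw [hjl] at h2
        exact hl2 (by rw [h2]; exact hjold)
      exact ⟨(u, v), k0 - 1, l0 - 1, fun _ =>
        ⟨hadj, rfl, hiN, hjN, hnew, hnoti _, by rw [← hjt]; exact hjold⟩⟩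
  choose zF fI fJ hmain using exmain
  -- injectivity of the vertex-pair representation
  have pr_inj : ∀ e ∈ G.edgeSet.toFinset, ∀ e' ∈ G.edgeSet.toFinset,
      ({(zF e).1, (zF e).2} : Finset V) = {(zF e').1, (zF e').2} → e = e' := by
    intro e he e' he' hEq
    obtain ⟨hadj, heq, -⟩ := hmain e he
    obtain ⟨hadj', heq', -⟩ := hmain e' he'
    rw [heq, heq']
    rcases pair_eq_cases hadj.ne hEq with ⟨h1, h2⟩ | ⟨h1, h2⟩
    · rw [h1, h2]
    · rw [h1, h2, Sym2.eq_swap]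
  have hIinj : Set.InjOn fI (G.edgeSet.toFinset : Set (Sym2 V)) := by
    intro e he e' he' hEq
    have he₁ := Finset.mem_coe.mp he
    have he₂ := Finset.mem_coe.mp he'
    have h1 := (hmain e he₁).2.2.2.2.1
    have h2 := (hmain e' he₂).2.2.2.2.1
    exact pr_inj e he₁ e' he₂ (by rw [← h1, ← h2, hEq])
  have hJinj : Set.InjOn fJ (G.edgeSet.toFinset : Set (Sym2 V)) := by
    intro e he e' he' hEq
    have he₁ := Finset.mem_coe.mp he
    have he₂ := Finset.mem_coe.mp he'
    have h1 := (hmain e he₁).2.2.2.2.2.2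
    have h2 := (hmain e' he₂).2.2.2.2.2.2
    exact pr_inj e he₁ e' he₂ (by rw [← h1, ← h2, hEq])
  set SP := G.edgeSet.toFinset.image fI with hSPdef
  set SD := G.edgeSet.toFinset.image fJ with hSDdef
  set K := SP ∩ SD with hKdef
  have hSPcard : SP.card = G.edgeSet.toFinset.card := Finset.card_image_of_injOn hIinj
  have hSDcard : SD.card = G.edgeSet.toFinset.card := Finset.card_image_of_injOn hJinj
  have hSPsub : SP ⊆ Finset.range N := by
    intro g hg
    obtain ⟨e, he, rfl⟩ := Finset.mem_image.mp hg
    exact Finset.mem_range.mpr (hmain e he).2.2.1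
  have hSDsub : SD ⊆ Finset.range N := by
    intro g hg
    obtain ⟨e, he, rfl⟩ := Finset.mem_image.mp hg
    exact Finset.mem_range.mpr (hmain e he).2.2.2.1
  -- structure of gates in K
  have hKfact : ∀ g ∈ K, ∃ e ∈ G.edgeSet.toFinset, ∃ e' ∈ G.edgeSet.toFinset,
      g = fJ e ∧ g = fI e' ∧ g < N ∧
      stt C g ((C.getD g default).2) = {(zF e).1, (zF e).2} ∧
      stt C (g+1) ((C.getD g default).2) = {(zF e').1, (zF e').2} ∧
      stt C g ((C.getD g default).2) ≠ stt C (g+1) ((C.getD g default).2) := by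
    intro g hg
    rw [hKdef, Finset.mem_inter] at hg
    obtain ⟨e', he', hIe'⟩ := Finset.mem_image.mp hg.1
    obtain ⟨e, he, hJe⟩ := Finset.mem_image.mp hg.2
    have hgN : g < N := by rw [← hIe']; exact (hmain e' he').2.2.1
    have hold : stt C g ((C.getD g default).2) = {(zF e).1, (zF e).2} := by
      rw [← hJe]; exact (hmain e he).2.2.2.2.2.2
    have hnew : stt C (g+1) ((C.getD g default).2) = {(zF e').1, (zF e').2} := by
      rw [← hIe']; exact (hmain e' he').2.2.2.2.1
    have hneq : stt C g ((C.getD g default).2) ≠ stt C (g+1) ((C.getD g default).2) := by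
      rw [hnew]
      have hthis := (hmain e' he').2.2.2.2.2.1
      rw [hIe'] at hthis
      exact hthis
    exact ⟨e, he, e', he', hJe.symm, hIe'.symm, hgN, hold, hnew, hneq⟩
  -- gate equation
  have hctl : ∀ g, g < N → stt C g ((C.getD g default).1) =
      symmDiff (stt C (g+1) ((C.getD g default).2)) (stt C g ((C.getD g default).2)) := by
    intro g hgN
    rw [stt_gate C hgN]
    exact (symmDiff_symmDiff_cancel_right _ _).symm
  -- existence of creation gates for control terms of K-gates
  have exgam : ∀ g : ℕ, ∃ a : ℕ, g ∈ K →
      (a < N ∧ stt C (a+1) ((C.getD a default).2) = stt C g ((C.getD g default).1)) := by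
    intro g
    by_cases hg : g ∈ K
    case neg => exact ⟨0, fun hh => absurd hh hg⟩
    obtain ⟨e, he, e', he', hgJ, hgI, hgN, hold, hnew, hneq⟩ := hKfact g hg
    have hBval := hctl g hgN
    have hnePair : ({(zF e').1, (zF e').2} : Finset V) ≠ {(zF e).1, (zF e).2} := by
      rw [← hnew, ← hold]
      exact fun hh => hneq hh.symm
    have hBnot : ∀ z : V, stt C g ((C.getD g default).1) ≠ {z} := by
      intro z hz
      rw [hBval, hnew, hold] at hz
      exact sd_not_singleton (hmain e' he').1.ne (hmain e he).1.ne hnePair z hz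
    have hP0 : stt C 0 ((C.getD g default).1) ≠ stt C g ((C.getD g default).1) := by
      rw [stt_zero]
      exact fun hh => hBnot _ hh.symm
    set a := Nat.findGreatest
      (fun i => stt C i ((C.getD g default).1) ≠ stt C g ((C.getD g default).1)) g with hadef
    have haP : stt C a ((C.getD g default).1) ≠ stt C g ((C.getD g default).1) :=
      Nat.findGreatest_spec
        (P := fun i => stt C i ((C.getD g default).1) ≠ stt C g ((C.getD g default).1))
        (Nat.zero_le g) hP0
    have haLe : a ≤ g := Nat.findGreatest_le g
    have haNe : a ≠ g := fun hh => haP (by rw [hh])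
    have haLt : a < g := lt_of_le_of_ne haLe haNe
    have haS : stt C (a+1) ((C.getD g default).1) = stt C g ((C.getD g default).1) := by
      have hgr : ¬ (stt C (a+1) ((C.getD g default).1) ≠ stt C g ((C.getD g default).1)) :=
        Nat.findGreatest_is_greatest
          (P := fun i => stt C i ((C.getD g default).1) ≠ stt C g ((C.getD g default).1))
          (n := g) (k := a + 1) (by omega) (by omega)
      exact not_not.mp hgr
    have htgt : (C.getD a default).2 = (C.getD g default).1 := by
      by_contra hne2
      have h2 := stt_other C (lt_trans haLt hgN) (Ne.symm hne2)
      exact haP (by rw [← h2]; exact haS)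
    exact ⟨a, fun _ => ⟨lt_trans haLt hgN, by rw [htgt]; exact haS⟩⟩
  choose gam hgam using exgam
  set SG := K.image gam with hSGdef
  have hSGsub : SG ⊆ Finset.range N := by
    intro a ha
    obtain ⟨g, hgK, rfl⟩ := Finset.mem_image.mp ha
    exact Finset.mem_range.mpr (hgam g hgK).1
  -- SP and SG are disjoint
  have hdisj : Disjoint SP SG := by
    rw [Finset.disjoint_right]
    intro a haG haP
    obtain ⟨g, hgK, hga⟩ := Finset.mem_image.mp haG
    obtain ⟨f, hf, hfa⟩ := Finset.mem_image.mp haP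
    obtain ⟨e, he, e', he', hgJ, hgI, hgN, hold, hnew, hneq⟩ := hKfact g hgK
    have hnePair : ({(zF e').1, (zF e').2} : Finset V) ≠ {(zF e).1, (zF e).2} := by
      rw [← hnew, ← hold]
      exact fun hh => hneq hh.symm
    have h1 := (hgam g hgK).2
    have h2 := (hmain f hf).2.2.2.2.1
    have hfinal2 : ({(zF f).1, (zF f).2} : Finset V) =
        symmDiff ({(zF e').1, (zF e').2} : Finset V) {(zF e).1, (zF e).2} := by
      rw [← h2, hfa, ← hga, h1, hctl g hgN, hnew, hold]
    exact notEdge hgirth (hmain e' he').1 (hmain e he).1 (hmain f hf).1 hnePair hfinal2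
  -- fiber bound for gam
  have hfib : ∀ b ∈ K.image gam, (K.filter (fun g => gam g = b)).card ≤ 2 := by
    intro b hb
    set F := K.filter (fun g => gam g = b) with hFdef
    rcases Finset.eq_empty_or_nonempty F with hFe | ⟨g1, hg1⟩
    · rw [hFe]; simp
    have hg1K : g1 ∈ K := (Finset.mem_filter.mp hg1).1
    obtain ⟨e1, he1, e1', he1', hg1J, hg1I, hg1N, hold1, hnew1, hneq1⟩ := hKfact g1 hg1K
    have hoinj : ∀ g ∈ K, ∀ g' ∈ K,
        stt C g ((C.getD g default).2) = stt C g' ((C.getD g' default).2) → g = g' := by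
      intro g hg g' hg' hEq
      obtain ⟨e, he, -, -, hgJ, -, -, hold, -, -⟩ := hKfact g hg
      obtain ⟨e2, he2, -, -, hgJ2, -, -, hold2, -, -⟩ := hKfact g' hg'
      rw [hgJ, hgJ2]
      exact congrArg fJ (pr_inj e he e2 he2 (by rw [← hold, ← hold2, hEq]))
    have himg : F.image (fun g => stt C g ((C.getD g default).2)) ⊆
        {stt C g1 ((C.getD g1 default).2), stt C (g1+1) ((C.getD g1 default).2)} := by
      intro x hx
      obtain ⟨g, hgF, hgx⟩ := Finset.mem_image.mp hx
      have hgK : g ∈ K := (Finset.mem_filter.mp hgF).1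
      obtain ⟨e, he, e', he', hgJ, hgI, hgN, hold, hnew, hneq⟩ := hKfact g hgK
      have hsame : symmDiff (stt C g ((C.getD g default).2)) (stt C (g+1) ((C.getD g default).2))
          = symmDiff (stt C g1 ((C.getD g1 default).2))
              (stt C (g1+1) ((C.getD g1 default).2)) := by
        have hc1 : stt C g ((C.getD g default).1) = stt C g1 ((C.getD g1 default).1) := by
          rw [← (hgam g hgK).2, ← (hgam g1 hg1K).2, (Finset.mem_filter.mp hgF).2,
            (Finset.mem_filter.mp hg1).2]
        have hgeq := hctl g hgN
        have hg1eq := hctl g1 hg1N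
        rw [hgeq, hg1eq] at hc1
        rw [symmDiff_comm (stt C g ((C.getD g default).2)), hc1, symmDiff_comm]
      rw [Finset.mem_insert, Finset.mem_singleton]
      by_contra hcon
      push_neg at hcon
      obtain ⟨hc1, hc2⟩ := hcon
      rw [← hgx] at hc1 hc2
      refine key hgirth (hmain e he).1 (hmain e' he').1 (hmain e1 he1).1 (hmain e1' he1').1
        ?_ ?_ ?_ ?_ ?_
      · rw [← hold, ← hnew, ← hold1, ← hnew1]
        exact hsame
      · rw [← hold, ← hnew]
        exact hneq
      · rw [← hold1, ← hnew1]
        exact hneq1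
      · rw [← hold, ← hold1]
        exact hc1
      · rw [← hold, ← hnew1]
        exact hc2
    have hFinj : Set.InjOn (fun g => stt C g ((C.getD g default).2)) (F : Set ℕ) := by
      intro g hg g' hg' hEq
      exact hoinj g (Finset.mem_filter.mp (Finset.mem_coe.mp hg)).1
        g' (Finset.mem_filter.mp (Finset.mem_coe.mp hg')).1 hEq
    calc F.card = (F.image (fun g => stt C g ((C.getD g default).2))).card :=
          (Finset.card_image_of_injOn hFinj).symm
      _ ≤ ({stt C g1 ((C.getD g1 default).2), stt C (g1+1) ((C.getD g1 default).2)} :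
            Finset (Finset V)).card := Finset.card_le_card himg
      _ ≤ 2 := Finset.card_le_two
  have hKbound : K.card ≤ 2 * SG.card := Finset.card_le_mul_card_image K 2 hfib
  -- final counting
  have hU1 : (SP ∪ SD).card ≤ N := by
    calc (SP ∪ SD).card ≤ (Finset.range N).card :=
          Finset.card_le_card (Finset.union_subset hSPsub hSDsub)
      _ = N := Finset.card_range N
  have hU2 : (SP ∪ SG).card ≤ N := by
    calc (SP ∪ SG).card ≤ (Finset.range N).card :=
          Finset.card_le_card (Finset.union_subset hSPsub hSGsub)
      _ = N := Finset.card_range N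
  have hE : (SP ∪ SD).card + K.card = SP.card + SD.card := Finset.card_union_add_card_inter SP SD
  have hDU : (SP ∪ SG).card = SP.card + SG.card := Finset.card_union_of_disjoint hdisj
  omega
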